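/- Let G and H be finite simple graphs such that H has at least one vertex. Then there exists a surjective locally surjective homomorphism from G onto H if and only if there exists a surjective p-morphism from Pos_⊥(G) onto Pos_⊥(H). -/
import Mathlib


/-- The carrier of the poset `Pos(G)`: vertices, two copies of the vertices,
two copies of the edges, and four auxiliary elements. -/
inductive PosElem (V E : Type) : Type where
  | ver (v : V)
  | verA (v : V)
  | verB (v : V)
  | edge1 (e : E)
  | edge2 (e : E)
  | top1
  | top2
  | infA
  | infB

/-- The covering relation of the poset `Pos(G)`, for a graph `G` together with a
choice `ε` of an ordered pair of endpoints for each edge. -/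
inductive PosCov {V : Type} (G : SimpleGraph V) (ε : ↥G.edgeSet → V × V) :
    PosElem V ↥G.edgeSet → PosElem V ↥G.edgeSet → Prop where
  | ver_verA (v : V) : PosCov G ε (.ver v) (.verA v)
  | ver_verB (v : V) : PosCov G ε (.ver v) (.verB v)
  | verA_infA (v : V) : PosCov G ε (.verA v) .infA
  | verB_infB (v : V) : PosCov G ε (.verB v) .infB
  | edge1_top1 (e : ↥G.edgeSet) : PosCov G ε (.edge1 e) .top1
  | edge1_top2 (e : ↥G.edgeSet) : PosCov G ε (.edge1 e) .top2
  | edge2_top1 (e : ↥G.edgeSet) : PosCov G ε (.edge2 e) .top1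
  | edge2_top2 (e : ↥G.edgeSet) : PosCov G ε (.edge2 e) .top2
  | isolA_top1 (v : V) (hv : ∀ w, ¬ G.Adj v w) : PosCov G ε (.verA v) .top1
  | isolA_top2 (v : V) (hv : ∀ w, ¬ G.Adj v w) : PosCov G ε (.verA v) .top2
  | isolB_top1 (v : V) (hv : ∀ w, ¬ G.Adj v w) : PosCov G ε (.verB v) .top1
  | isolB_top2 (v : V) (hv : ∀ w, ¬ G.Adj v w) : PosCov G ε (.verB v) .top2
  | ua_edge1 (e : ↥G.edgeSet) : PosCov G ε (.verA (ε e).1) (.edge1 e)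
  | vb_edge1 (e : ↥G.edgeSet) : PosCov G ε (.verB (ε e).2) (.edge1 e)
  | ub_edge2 (e : ↥G.edgeSet) : PosCov G ε (.verB (ε e).1) (.edge2 e)
  | va_edge2 (e : ↥G.edgeSet) : PosCov G ε (.verA (ε e).2) (.edge2 e)

/-- The order of `Pos(G)`: the reflexive-transitive closure of the covering relation. -/
def PosLe {V : Type} (G : SimpleGraph V) (ε : ↥G.edgeSet → V × V)
    (x y : PosElem V ↥G.edgeSet) : Prop :=
  Relation.ReflTransGen (PosCov G ε) x y

/-- `ε` assigns to every edge an ordered pair of its two endpoints. -/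
def OrientOK {V : Type} (G : SimpleGraph V) (ε : ↥G.edgeSet → V × V) : Prop :=
  ∀ e : ↥G.edgeSet, (e : Sym2 V) = s((ε e).1, (ε e).2)

/-- A p-morphism with respect to given order relations: the homomorphism property (HP)
and the backward property (BP). -/
def IsPMorphismRel {α β : Type} (leP : α → α → Prop) (leQ : β → β → Prop)
    (h : α → β) : Prop :=
  (∀ x y, leP x y → leQ (h x) (h y)) ∧
  (∀ (x : α) (y : β), leQ (h x) y → ∃ z : α, leP x z ∧ h z = y)

/-- A locally surjective graph homomorphism: the homomorphism property (HP) and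
the backward property (BP) for graphs. -/
def IsLocallySurjHom {VG VH : Type} (G : SimpleGraph VG) (H : SimpleGraph VH)
    (g : VG → VH) : Prop :=
  (∀ u v : VG, G.Adj u v → H.Adj (g u) (g v)) ∧
  (∀ (u : VG) (w : VH), H.Adj (g u) w → ∃ v : VG, G.Adj u v ∧ g v = w)

/-- The order of the rooted poset `Pos⊥(G)`: `Pos(G)` with a new minimum element
`⊥` (represented by `none`) adjoined. -/
def PosBotLe {V : Type} (G : SimpleGraph V) (ε : ↥G.edgeSet → V × V) :
    Option (PosElem V ↥G.edgeSet) → Option (PosElem V ↥G.edgeSet) → Prop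
  | none, _ => True
  | some _, none => False
  | some x, some y => PosLe G ε x y

section Aux

variable {V : Type} {G : SimpleGraph V} {ε : ↥G.edgeSet → V × V}

/-- Explicit description of the order of `Pos(G)`. -/
def PUp (ε : ↥G.edgeSet → V × V) :
    PosElem V ↥G.edgeSet → PosElem V ↥G.edgeSet → Prop
  | .ver v, .ver w => v = w
  | .ver v, .verA w => v = w
  | .ver v, .verB w => v = w
  | .ver v, .edge1 f => v = (ε f).1 ∨ v = (ε f).2
  | .ver v, .edge2 f => v = (ε f).1 ∨ v = (ε f).2
  | .ver _, .top1 => True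
  | .ver _, .top2 => True
  | .ver _, .infA => True
  | .ver _, .infB => True
  | .verA _, .ver _ => False
  | .verA v, .verA w => v = w
  | .verA _, .verB _ => False
  | .verA v, .edge1 f => v = (ε f).1
  | .verA v, .edge2 f => v = (ε f).2
  | .verA _, .top1 => True
  | .verA _, .top2 => True
  | .verA _, .infA => True
  | .verA _, .infB => False
  | .verB _, .ver _ => False
  | .verB _, .verA _ => False
  | .verB v, .verB w => v = w
  | .verB v, .edge1 f => v = (ε f).2
  | .verB v, .edge2 f => v = (ε f).1
  | .verB _, .top1 => True
  | .verB _, .top2 => True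
  | .verB _, .infA => False
  | .verB _, .infB => True
  | .edge1 _, .ver _ => False
  | .edge1 _, .verA _ => False
  | .edge1 _, .verB _ => False
  | .edge1 e, .edge1 f => e = f
  | .edge1 _, .edge2 _ => False
  | .edge1 _, .top1 => True
  | .edge1 _, .top2 => True
  | .edge1 _, .infA => False
  | .edge1 _, .infB => False
  | .edge2 _, .ver _ => False
  | .edge2 _, .verA _ => False
  | .edge2 _, .verB _ => False
  | .edge2 _, .edge1 _ => False
  | .edge2 e, .edge2 f => e = f
  | .edge2 _, .top1 => True
  | .edge2 _, .top2 => True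
  | .edge2 _, .infA => False
  | .edge2 _, .infB => False
  | .top1, .ver _ => False
  | .top1, .verA _ => False
  | .top1, .verB _ => False
  | .top1, .edge1 _ => False
  | .top1, .edge2 _ => False
  | .top1, .top1 => True
  | .top1, .top2 => False
  | .top1, .infA => False
  | .top1, .infB => False
  | .top2, .ver _ => False
  | .top2, .verA _ => False
  | .top2, .verB _ => False
  | .top2, .edge1 _ => False
  | .top2, .edge2 _ => False
  | .top2, .top1 => False
  | .top2, .top2 => True
  | .top2, .infA => False
  | .top2, .infB => False
  | .infA, .ver _ => False
  | .infA, .verA _ => False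
  | .infA, .verB _ => False
  | .infA, .edge1 _ => False
  | .infA, .edge2 _ => False
  | .infA, .top1 => False
  | .infA, .top2 => False
  | .infA, .infA => True
  | .infA, .infB => False
  | .infB, .ver _ => False
  | .infB, .verA _ => False
  | .infB, .verB _ => False
  | .infB, .edge1 _ => False
  | .infB, .edge2 _ => False
  | .infB, .top1 => False
  | .infB, .top2 => False
  | .infB, .infA => False
  | .infB, .infB => True

theorem pup_refl (x : PosElem V ↥G.edgeSet) : PUp ε x x := by
  cases x <;> simp [PUp]

theorem posLe_of_cov {x y : PosElem V ↥G.edgeSet} (h : PosCov G ε x y) :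
    PosLe G ε x y := Relation.ReflTransGen.single h

theorem posLe_refl (x : PosElem V ↥G.edgeSet) : PosLe G ε x x :=
  Relation.ReflTransGen.refl

theorem posLe_trans {x y z : PosElem V ↥G.edgeSet} (h : PosLe G ε x y)
    (h' : PosLe G ε y z) : PosLe G ε x z := Relation.ReflTransGen.trans h h'


theorem verA_le_edge1' {v : V} (e : ↥G.edgeSet) (h : v = (ε e).1) :
    PosLe G ε (.verA v) (.edge1 e) := by
  subst h; exact posLe_of_cov (PosCov.ua_edge1 e)

theorem verA_le_edge2' {v : V} (e : ↥G.edgeSet) (h : v = (ε e).2) :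
    PosLe G ε (.verA v) (.edge2 e) := by
  subst h; exact posLe_of_cov (PosCov.va_edge2 e)

theorem verB_le_edge1' {v : V} (e : ↥G.edgeSet) (h : v = (ε e).2) :
    PosLe G ε (.verB v) (.edge1 e) := by
  subst h; exact posLe_of_cov (PosCov.vb_edge1 e)

theorem verB_le_edge2' {v : V} (e : ↥G.edgeSet) (h : v = (ε e).1) :
    PosLe G ε (.verB v) (.edge2 e) := by
  subst h; exact posLe_of_cov (PosCov.ub_edge2 e)

theorem edge_le_top (e : ↥G.edgeSet) (i : Bool) (t : PosElem V ↥G.edgeSet)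
    (ht : t = .top1 ∨ t = .top2) :
    PosLe G ε (if i then .edge1 e else .edge2 e) t := by
  cases i <;> rcases ht with rfl | rfl <;> simp <;>
    [exact posLe_of_cov (PosCov.edge2_top1 e);
     exact posLe_of_cov (PosCov.edge2_top2 e);
     exact posLe_of_cov (PosCov.edge1_top1 e);
     exact posLe_of_cov (PosCov.edge1_top2 e)]

theorem verA_le_top (hε : OrientOK G ε) (v : V)
    (t : PosElem V ↥G.edgeSet) (ht : t = .top1 ∨ t = .top2) :
    PosLe G ε (.verA v) t := by
  by_cases hiso : ∀ w, ¬ G.Adj v w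
  · rcases ht with rfl | rfl
    · exact posLe_of_cov (PosCov.isolA_top1 v hiso)
    · exact posLe_of_cov (PosCov.isolA_top2 v hiso)
  · push_neg at hiso
    obtain ⟨w, hw⟩ := hiso
    have he : s(v, w) ∈ G.edgeSet := hw
    have horient := hε ⟨s(v, w), he⟩
    rw [show ((⟨s(v,w), he⟩ : ↥G.edgeSet) : Sym2 V) = s(v,w) from rfl,
      Sym2.eq_iff] at horient
    rcases horient with ⟨h1, _⟩ | ⟨h1, _⟩
    · refine posLe_trans (verA_le_edge1' ⟨s(v,w), he⟩ h1) ?_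
      rcases ht with rfl | rfl
      · exact posLe_of_cov (PosCov.edge1_top1 _)
      · exact posLe_of_cov (PosCov.edge1_top2 _)
    · refine posLe_trans (verA_le_edge2' ⟨s(v,w), he⟩ h1) ?_
      rcases ht with rfl | rfl
      · exact posLe_of_cov (PosCov.edge2_top1 _)
      · exact posLe_of_cov (PosCov.edge2_top2 _)

theorem verB_le_top (hε : OrientOK G ε) (v : V)
    (t : PosElem V ↥G.edgeSet) (ht : t = .top1 ∨ t = .top2) :
    PosLe G ε (.verB v) t := by
  by_cases hiso : ∀ w, ¬ G.Adj v w
  · rcases ht with rfl | rfl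
    · exact posLe_of_cov (PosCov.isolB_top1 v hiso)
    · exact posLe_of_cov (PosCov.isolB_top2 v hiso)
  · push_neg at hiso
    obtain ⟨w, hw⟩ := hiso
    have he : s(v, w) ∈ G.edgeSet := hw
    have horient := hε ⟨s(v, w), he⟩
    rw [show ((⟨s(v,w), he⟩ : ↥G.edgeSet) : Sym2 V) = s(v,w) from rfl,
      Sym2.eq_iff] at horient
    rcases horient with ⟨h1, _⟩ | ⟨h1, _⟩
    · refine posLe_trans (verB_le_edge2' ⟨s(v,w), he⟩ h1) ?_
      rcases ht with rfl | rfl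
      · exact posLe_of_cov (PosCov.edge2_top1 _)
      · exact posLe_of_cov (PosCov.edge2_top2 _)
    · refine posLe_trans (verB_le_edge1' ⟨s(v,w), he⟩ h1) ?_
      rcases ht with rfl | rfl
      · exact posLe_of_cov (PosCov.edge1_top1 _)
      · exact posLe_of_cov (PosCov.edge1_top2 _)

set_option maxHeartbeats 1000000 in
/-- The characterization of the order of `Pos(G)`. -/
theorem posLe_iff (hε : OrientOK G ε) (x y : PosElem V ↥G.edgeSet) :
    PosLe G ε x y ↔ PUp ε x y := by
  constructor
  · intro h
    induction h using Relation.ReflTransGen.head_induction_on with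
    | refl => exact pup_refl y
    | head hcov _ ih =>
      cases hcov <;> cases y <;> simp_all [PUp]
  · intro h
    cases x <;> cases y <;> simp only [PUp] at h ⊢
    case ver.ver v w => subst h; exact posLe_refl _
    case ver.verA v w => subst h; exact posLe_of_cov (PosCov.ver_verA v)
    case ver.verB v w => subst h; exact posLe_of_cov (PosCov.ver_verB v)
    case ver.infA v =>
      exact posLe_trans (posLe_of_cov (PosCov.ver_verA v))
        (posLe_of_cov (PosCov.verA_infA v))
    case ver.infB v =>
      exact posLe_trans (posLe_of_cov (PosCov.ver_verB v))
        (posLe_of_cov (PosCov.verB_infB v))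
    case ver.top1 v =>
      exact posLe_trans (posLe_of_cov (PosCov.ver_verA v))
        (verA_le_top hε v _ (Or.inl rfl))
    case ver.top2 v =>
      exact posLe_trans (posLe_of_cov (PosCov.ver_verA v))
        (verA_le_top hε v _ (Or.inr rfl))
    case ver.edge1 v e =>
      rcases h with h | h
      · exact posLe_trans (posLe_of_cov (PosCov.ver_verA _)) (verA_le_edge1' e h)
      · exact posLe_trans (posLe_of_cov (PosCov.ver_verB _)) (verB_le_edge1' e h)
    case ver.edge2 v e =>
      rcases h with h | h
      · exact posLe_trans (posLe_of_cov (PosCov.ver_verB _)) (verB_le_edge2' e h)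
      · exact posLe_trans (posLe_of_cov (PosCov.ver_verA _)) (verA_le_edge2' e h)
    case verA.verA v w => subst h; exact posLe_refl _
    case verA.infA v => exact posLe_of_cov (PosCov.verA_infA v)
    case verA.top1 v => exact verA_le_top hε v _ (Or.inl rfl)
    case verA.top2 v => exact verA_le_top hε v _ (Or.inr rfl)
    case verA.edge1 v e => exact verA_le_edge1' e h
    case verA.edge2 v e => exact verA_le_edge2' e h
    case verB.verB v w => subst h; exact posLe_refl _
    case verB.infB v => exact posLe_of_cov (PosCov.verB_infB v)
    case verB.top1 v => exact verB_le_top hε v _ (Or.inl rfl)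
    case verB.top2 v => exact verB_le_top hε v _ (Or.inr rfl)
    case verB.edge1 v e => exact verB_le_edge1' e h
    case verB.edge2 v e => exact verB_le_edge2' e h
    case edge1.edge1 e e' => subst h; exact posLe_refl _
    case edge1.top1 e => exact posLe_of_cov (PosCov.edge1_top1 e)
    case edge1.top2 e => exact posLe_of_cov (PosCov.edge1_top2 e)
    case edge2.edge2 e e' => subst h; exact posLe_refl _
    case edge2.top1 e => exact posLe_of_cov (PosCov.edge2_top1 e)
    case edge2.top2 e => exact posLe_of_cov (PosCov.edge2_top2 e)
    case top1.top1 => exact posLe_refl _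
    case top2.top2 => exact posLe_refl _
    case infA.infA => exact posLe_refl _
    case infB.infB => exact posLe_refl _

end Aux
section Forward

open Classical in
/-- The map `Pos(G) → Pos(H)` induced by a graph map `g` (with edge map `gE`). -/
noncomputable def FMap {VG VH : Type} {G : SimpleGraph VG} {H : SimpleGraph VH}
    (εG : ↥G.edgeSet → VG × VG) (εH : ↥H.edgeSet → VH × VH)
    (g : VG → VH) (gE : ↥G.edgeSet → ↥H.edgeSet) :
    PosElem VG ↥G.edgeSet → PosElem VH ↥H.edgeSet
  | .ver v => .ver (g v)
  | .verA v => .verA (g v)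
  | .verB v => .verB (g v)
  | .edge1 e => if εH (gE e) = (g (εG e).1, g (εG e).2) then .edge1 (gE e)
      else .edge2 (gE e)
  | .edge2 e => if εH (gE e) = (g (εG e).1, g (εG e).2) then .edge2 (gE e)
      else .edge1 (gE e)
  | .top1 => .top1
  | .top2 => .top2
  | .infA => .infA
  | .infB => .infB

variable {VG VH : Type} {G : SimpleGraph VG} {H : SimpleGraph VH}
    {εG : ↥G.edgeSet → VG × VG} {εH : ↥H.edgeSet → VH × VH}
    {g : VG → VH} {gE : ↥G.edgeSet → ↥H.edgeSet}

theorem adj_orient {V : Type} {K : SimpleGraph V} {ε : ↥K.edgeSet → V × V}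
    (hε : OrientOK K ε) (e : ↥K.edgeSet) : K.Adj (ε e).1 (ε e).2 :=
  (SimpleGraph.mem_edgeSet K).mp (hε e ▸ e.2)

/-- Case analysis on the relation between the orientations of an edge and its image. -/
theorem cond_cases (hεG : OrientOK G εG) (hεH : OrientOK H εH)
    (hgE : ∀ e, (gE e : Sym2 VH) = Sym2.map g ↑e) (e : ↥G.edgeSet) :
    (εH (gE e) = (g (εG e).1, g (εG e).2) ∧
      FMap εG εH g gE (.edge1 e) = .edge1 (gE e) ∧
      FMap εG εH g gE (.edge2 e) = .edge2 (gE e)) ∨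
    (εH (gE e) = (g (εG e).2, g (εG e).1) ∧
      FMap εG εH g gE (.edge1 e) = .edge2 (gE e) ∧
      FMap εG εH g gE (.edge2 e) = .edge1 (gE e)) := by
  have hne : (εH (gE e)).1 ≠ (εH (gE e)).2 := (adj_orient hεH (gE e)).ne
  have hsym : s((εH (gE e)).1, (εH (gE e)).2) = s(g (εG e).1, g (εG e).2) := by
    rw [← hεH (gE e), hgE e, hεG e, Sym2.map_pair_eq]
  rw [Sym2.eq_iff] at hsym
  rcases hsym with ⟨h1, h2⟩ | ⟨h1, h2⟩
  · left
    have hc : εH (gE e) = (g (εG e).1, g (εG e).2) := Prod.ext h1 h2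
    exact ⟨hc, by simp [FMap, hc], by simp [FMap, hc]⟩
  · right
    have hc : εH (gE e) = (g (εG e).2, g (εG e).1) := Prod.ext h1 h2
    have hnc : ¬ εH (gE e) = (g (εG e).1, g (εG e).2) := by
      intro hc'
      rw [hc'] at hc
      have : g (εG e).1 = g (εG e).2 := congrArg Prod.fst hc
      rw [hc'] at hne
      exact hne this
    exact ⟨hc, by simp [FMap, hnc], by simp [FMap, hnc]⟩

theorem fmap_cov (hεG : OrientOK G εG) (hεH : OrientOK H εH)
    (hgE : ∀ e, (gE e : Sym2 VH) = Sym2.map g ↑e)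
    (hBPg : ∀ (u : VG) (w : VH), H.Adj (g u) w → ∃ v : VG, G.Adj u v ∧ g v = w)
    {x y : PosElem VG ↥G.edgeSet} (hc : PosCov G εG x y) :
    PosCov H εH (FMap εG εH g gE x) (FMap εG εH g gE y) := by
  have hiso : ∀ v : VG, (∀ w, ¬ G.Adj v w) → ∀ w, ¬ H.Adj (g v) w := by
    intro v hv w hadj
    obtain ⟨v', hv', _⟩ := hBPg v w hadj
    exact hv v' hv'
  cases hc with
  | ver_verA v => exact PosCov.ver_verA (g v)
  | ver_verB v => exact PosCov.ver_verB (g v)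
  | verA_infA v => exact PosCov.verA_infA (g v)
  | verB_infB v => exact PosCov.verB_infB (g v)
  | edge1_top1 e =>
    rcases cond_cases hεG hεH hgE e with ⟨_, h1, _⟩ | ⟨_, h1, _⟩ <;> rw [h1]
    · exact PosCov.edge1_top1 _
    · exact PosCov.edge2_top1 _
  | edge1_top2 e =>
    rcases cond_cases hεG hεH hgE e with ⟨_, h1, _⟩ | ⟨_, h1, _⟩ <;> rw [h1]
    · exact PosCov.edge1_top2 _
    · exact PosCov.edge2_top2 _
  | edge2_top1 e =>
    rcases cond_cases hεG hεH hgE e with ⟨_, _, h1⟩ | ⟨_, _, h1⟩ <;> rw [h1]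
    · exact PosCov.edge2_top1 _
    · exact PosCov.edge1_top1 _
  | edge2_top2 e =>
    rcases cond_cases hεG hεH hgE e with ⟨_, _, h1⟩ | ⟨_, _, h1⟩ <;> rw [h1]
    · exact PosCov.edge2_top2 _
    · exact PosCov.edge1_top2 _
  | isolA_top1 v hv => exact PosCov.isolA_top1 (g v) (hiso v hv)
  | isolA_top2 v hv => exact PosCov.isolA_top2 (g v) (hiso v hv)
  | isolB_top1 v hv => exact PosCov.isolB_top1 (g v) (hiso v hv)
  | isolB_top2 v hv => exact PosCov.isolB_top2 (g v) (hiso v hv)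
  | ua_edge1 e =>
    rcases cond_cases hεG hεH hgE e with ⟨hc, h1, _⟩ | ⟨hc, h1, _⟩ <;> rw [h1]
    · have := PosCov.ua_edge1 (G := H) (ε := εH) (gE e)
      rwa [hc] at this
    · have := PosCov.va_edge2 (G := H) (ε := εH) (gE e)
      rwa [hc] at this
  | vb_edge1 e =>
    rcases cond_cases hεG hεH hgE e with ⟨hc, h1, _⟩ | ⟨hc, h1, _⟩ <;> rw [h1]
    · have := PosCov.vb_edge1 (G := H) (ε := εH) (gE e)
      rwa [hc] at this
    · have := PosCov.ub_edge2 (G := H) (ε := εH) (gE e)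
      rwa [hc] at this
  | ub_edge2 e =>
    rcases cond_cases hεG hεH hgE e with ⟨hc, _, h1⟩ | ⟨hc, _, h1⟩ <;> rw [h1]
    · have := PosCov.ub_edge2 (G := H) (ε := εH) (gE e)
      rwa [hc] at this
    · have := PosCov.vb_edge1 (G := H) (ε := εH) (gE e)
      rwa [hc] at this
  | va_edge2 e =>
    rcases cond_cases hεG hεH hgE e with ⟨hc, _, h1⟩ | ⟨hc, _, h1⟩ <;> rw [h1]
    · have := PosCov.va_edge2 (G := H) (ε := εH) (gE e)
      rwa [hc] at this
    · have := PosCov.ua_edge1 (G := H) (ε := εH) (gE e)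
      rwa [hc] at this

theorem fmap_le (hεG : OrientOK G εG) (hεH : OrientOK H εH)
    (hgE : ∀ e, (gE e : Sym2 VH) = Sym2.map g ↑e)
    (hBPg : ∀ (u : VG) (w : VH), H.Adj (g u) w → ∃ v : VG, G.Adj u v ∧ g v = w)
    {x y : PosElem VG ↥G.edgeSet} (hle : PosLe G εG x y) :
    PosLe H εH (FMap εG εH g gE x) (FMap εG εH g gE y) := by
  induction hle with
  | refl => exact posLe_refl _
  | tail _ hc ih =>
    exact posLe_trans ih (posLe_of_cov (fmap_cov hεG hεH hgE hBPg hc))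

end Forward
section Build

variable {VG VH : Type} {G : SimpleGraph VG} {H : SimpleGraph VH}
    {εG : ↥G.edgeSet → VG × VG} {εH : ↥H.edgeSet → VH × VH}
    {g : VG → VH} {gE : ↥G.edgeSet → ↥H.edgeSet}

theorem orient_pair (hεG : OrientOK G εG) {v w : VG} (h : s(v, w) ∈ G.edgeSet) :
    εG ⟨s(v, w), h⟩ = (v, w) ∨ εG ⟨s(v, w), h⟩ = (w, v) := by
  have h1 := hεG ⟨s(v, w), h⟩
  rw [show ((⟨s(v,w), h⟩ : ↥G.edgeSet) : Sym2 VG) = s(v,w) from rfl, Sym2.eq_iff] at h1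
  rcases h1 with ⟨h1, h2⟩ | ⟨h1, h2⟩
  · exact Or.inl (Prod.ext h1.symm h2.symm)
  · exact Or.inr (Prod.ext h2.symm h1.symm)

theorem gE_eq (hgE : ∀ e, (gE e : Sym2 VH) = Sym2.map g ↑e)
    {v w : VG} (h : s(v, w) ∈ G.edgeSet) {f : ↥H.edgeSet}
    (hf : s(g v, g w) = (f : Sym2 VH)) : gE ⟨s(v, w), h⟩ = f := by
  apply Subtype.ext
  rw [hgE ⟨s(v,w), h⟩,
    show ((⟨s(v,w), h⟩ : ↥G.edgeSet) : Sym2 VG) = s(v,w) from rfl,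
    Sym2.map_pair_eq, hf]

theorem epsH_ne (hεH : OrientOK H εH) (f : ↥H.edgeSet) : (εH f).1 ≠ (εH f).2 :=
  (adj_orient hεH f).ne

/-- Given `g v = (εH f).1`, produce an element above `verA v` mapping to `edge1 f`. -/
theorem buildA1 (hεG : OrientOK G εG) (hεH : OrientOK H εH)
    (hgE : ∀ e, (gE e : Sym2 VH) = Sym2.map g ↑e)
    (hBPg : ∀ (u : VG) (w : VH), H.Adj (g u) w → ∃ v : VG, G.Adj u v ∧ g v = w)
    {v : VG} {f : ↥H.edgeSet} (hv : g v = (εH f).1) :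
    ∃ z, PosLe G εG (.verA v) z ∧ FMap εG εH g gE z = .edge1 f := by
  have hadjH : H.Adj (g v) (εH f).2 := by rw [hv]; exact adj_orient hεH f
  obtain ⟨w, hvw, hw⟩ := hBPg v _ hadjH
  have hmem : s(v, w) ∈ G.edgeSet := (SimpleGraph.mem_edgeSet G).mpr hvw
  have hfe : gE ⟨s(v, w), hmem⟩ = f := by
    apply gE_eq hgE
    rw [hv, hw, ← hεH f]
  rcases orient_pair hεG hmem with h1 | h1 <;>
    rcases cond_cases hεG hεH hgE ⟨s(v, w), hmem⟩ with ⟨hc, hF1, hF2⟩ | ⟨hc, hF1, hF2⟩ <;>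
      rw [hfe, h1] at hc
  · exact ⟨.edge1 ⟨s(v, w), hmem⟩,
      verA_le_edge1' _ (by rw [h1]), by rw [hF1, hfe]⟩
  · have h2 : (εH f).1 = g w := congrArg Prod.fst hc
    exact absurd (by rw [h2, hw]) (epsH_ne hεH f)
  · have h2 : (εH f).1 = g w := congrArg Prod.fst hc
    exact absurd (by rw [h2, hw]) (epsH_ne hεH f)
  · exact ⟨.edge2 ⟨s(v, w), hmem⟩,
      verA_le_edge2' _ (by rw [h1]), by rw [hF2, hfe]⟩

/-- Given `g v = (εH f).2`, produce an element above `verA v` mapping to `edge2 f`. -/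
theorem buildA2 (hεG : OrientOK G εG) (hεH : OrientOK H εH)
    (hgE : ∀ e, (gE e : Sym2 VH) = Sym2.map g ↑e)
    (hBPg : ∀ (u : VG) (w : VH), H.Adj (g u) w → ∃ v : VG, G.Adj u v ∧ g v = w)
    {v : VG} {f : ↥H.edgeSet} (hv : g v = (εH f).2) :
    ∃ z, PosLe G εG (.verA v) z ∧ FMap εG εH g gE z = .edge2 f := by
  have hadjH : H.Adj (g v) (εH f).1 := by rw [hv]; exact (adj_orient hεH f).symm
  obtain ⟨w, hvw, hw⟩ := hBPg v _ hadjH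
  have hmem : s(v, w) ∈ G.edgeSet := (SimpleGraph.mem_edgeSet G).mpr hvw
  have hfe : gE ⟨s(v, w), hmem⟩ = f := by
    apply gE_eq hgE
    rw [hv, hw, Sym2.eq_swap, ← hεH f]
  rcases orient_pair hεG hmem with h1 | h1 <;>
    rcases cond_cases hεG hεH hgE ⟨s(v, w), hmem⟩ with ⟨hc, hF1, hF2⟩ | ⟨hc, hF1, hF2⟩ <;>
      rw [hfe, h1] at hc
  · have h2 : (εH f).1 = g v := congrArg Prod.fst hc
    exact absurd (by rw [h2, hv]) (epsH_ne hεH f)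
  · exact ⟨.edge1 ⟨s(v, w), hmem⟩,
      verA_le_edge1' _ (by rw [h1]), by rw [hF1, hfe]⟩
  · exact ⟨.edge2 ⟨s(v, w), hmem⟩,
      verA_le_edge2' _ (by rw [h1]), by rw [hF2, hfe]⟩
  · have h2 : (εH f).1 = g v := congrArg Prod.fst hc
    exact absurd (by rw [h2, hv]) (epsH_ne hεH f)

/-- Given `g v = (εH f).2`, produce an element above `verB v` mapping to `edge1 f`. -/
theorem buildB1 (hεG : OrientOK G εG) (hεH : OrientOK H εH)
    (hgE : ∀ e, (gE e : Sym2 VH) = Sym2.map g ↑e)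
    (hBPg : ∀ (u : VG) (w : VH), H.Adj (g u) w → ∃ v : VG, G.Adj u v ∧ g v = w)
    {v : VG} {f : ↥H.edgeSet} (hv : g v = (εH f).2) :
    ∃ z, PosLe G εG (.verB v) z ∧ FMap εG εH g gE z = .edge1 f := by
  have hadjH : H.Adj (g v) (εH f).1 := by rw [hv]; exact (adj_orient hεH f).symm
  obtain ⟨w, hvw, hw⟩ := hBPg v _ hadjH
  have hmem : s(v, w) ∈ G.edgeSet := (SimpleGraph.mem_edgeSet G).mpr hvw
  have hfe : gE ⟨s(v, w), hmem⟩ = f := by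
    apply gE_eq hgE
    rw [hv, hw, Sym2.eq_swap, ← hεH f]
  rcases orient_pair hεG hmem with h1 | h1 <;>
    rcases cond_cases hεG hεH hgE ⟨s(v, w), hmem⟩ with ⟨hc, hF1, hF2⟩ | ⟨hc, hF1, hF2⟩ <;>
      rw [hfe, h1] at hc
  · have h2 : (εH f).1 = g v := congrArg Prod.fst hc
    exact absurd (by rw [h2, hv]) (epsH_ne hεH f)
  · exact ⟨.edge2 ⟨s(v, w), hmem⟩,
      verB_le_edge2' _ (by rw [h1]), by rw [hF2, hfe]⟩
  · exact ⟨.edge1 ⟨s(v, w), hmem⟩,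
      verB_le_edge1' _ (by rw [h1]), by rw [hF1, hfe]⟩
  · have h2 : (εH f).1 = g v := congrArg Prod.fst hc
    exact absurd (by rw [h2, hv]) (epsH_ne hεH f)

/-- Given `g v = (εH f).1`, produce an element above `verB v` mapping to `edge2 f`. -/
theorem buildB2 (hεG : OrientOK G εG) (hεH : OrientOK H εH)
    (hgE : ∀ e, (gE e : Sym2 VH) = Sym2.map g ↑e)
    (hBPg : ∀ (u : VG) (w : VH), H.Adj (g u) w → ∃ v : VG, G.Adj u v ∧ g v = w)
    {v : VG} {f : ↥H.edgeSet} (hv : g v = (εH f).1) :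
    ∃ z, PosLe G εG (.verB v) z ∧ FMap εG εH g gE z = .edge2 f := by
  have hadjH : H.Adj (g v) (εH f).2 := by rw [hv]; exact adj_orient hεH f
  obtain ⟨w, hvw, hw⟩ := hBPg v _ hadjH
  have hmem : s(v, w) ∈ G.edgeSet := (SimpleGraph.mem_edgeSet G).mpr hvw
  have hfe : gE ⟨s(v, w), hmem⟩ = f := by
    apply gE_eq hgE
    rw [hv, hw, ← hεH f]
  rcases orient_pair hεG hmem with h1 | h1 <;>
    rcases cond_cases hεG hεH hgE ⟨s(v, w), hmem⟩ with ⟨hc, hF1, hF2⟩ | ⟨hc, hF1, hF2⟩ <;>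
      rw [hfe, h1] at hc
  · exact ⟨.edge2 ⟨s(v, w), hmem⟩,
      verB_le_edge2' _ (by rw [h1]), by rw [hF2, hfe]⟩
  · have h2 : (εH f).1 = g w := congrArg Prod.fst hc
    exact absurd (by rw [h2, hw]) (epsH_ne hεH f)
  · have h2 : (εH f).1 = g w := congrArg Prod.fst hc
    exact absurd (by rw [h2, hw]) (epsH_ne hεH f)
  · exact ⟨.edge1 ⟨s(v, w), hmem⟩,
      verB_le_edge1' _ (by rw [h1]), by rw [hF1, hfe]⟩

theorem buildV1 (hεG : OrientOK G εG) (hεH : OrientOK H εH)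
    (hgE : ∀ e, (gE e : Sym2 VH) = Sym2.map g ↑e)
    (hBPg : ∀ (u : VG) (w : VH), H.Adj (g u) w → ∃ v : VG, G.Adj u v ∧ g v = w)
    {v : VG} {f : ↥H.edgeSet} (hv : g v = (εH f).1 ∨ g v = (εH f).2) :
    ∃ z, PosLe G εG (.ver v) z ∧ FMap εG εH g gE z = .edge1 f := by
  rcases hv with hv | hv
  · obtain ⟨z, hz, hF⟩ := buildA1 hεG hεH hgE hBPg hv
    exact ⟨z, posLe_trans (posLe_of_cov (PosCov.ver_verA v)) hz, hF⟩
  · obtain ⟨z, hz, hF⟩ := buildB1 hεG hεH hgE hBPg hv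
    exact ⟨z, posLe_trans (posLe_of_cov (PosCov.ver_verB v)) hz, hF⟩

theorem buildV2 (hεG : OrientOK G εG) (hεH : OrientOK H εH)
    (hgE : ∀ e, (gE e : Sym2 VH) = Sym2.map g ↑e)
    (hBPg : ∀ (u : VG) (w : VH), H.Adj (g u) w → ∃ v : VG, G.Adj u v ∧ g v = w)
    {v : VG} {f : ↥H.edgeSet} (hv : g v = (εH f).1 ∨ g v = (εH f).2) :
    ∃ z, PosLe G εG (.ver v) z ∧ FMap εG εH g gE z = .edge2 f := by
  rcases hv with hv | hv
  · obtain ⟨z, hz, hF⟩ := buildB2 hεG hεH hgE hBPg hv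
    exact ⟨z, posLe_trans (posLe_of_cov (PosCov.ver_verB v)) hz, hF⟩
  · obtain ⟨z, hz, hF⟩ := buildA2 hεG hεH hgE hBPg hv
    exact ⟨z, posLe_trans (posLe_of_cov (PosCov.ver_verA v)) hz, hF⟩


end Build
section ForwardMain

variable {VG VH : Type} {G : SimpleGraph VG} {H : SimpleGraph VH}
    {εG : ↥G.edgeSet → VG × VG} {εH : ↥H.edgeSet → VH × VH}

theorem forward_dir (hεG : OrientOK G εG) (hεH : OrientOK H εH)
    (g : VG → VH) (hgsurj : Function.Surjective g)
    (hHPg : ∀ u v : VG, G.Adj u v → H.Adj (g u) (g v))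
    (hBPg : ∀ (u : VG) (w : VH), H.Adj (g u) w → ∃ v : VG, G.Adj u v ∧ g v = w) :
    ∃ h : Option (PosElem VG ↥G.edgeSet) → Option (PosElem VH ↥H.edgeSet),
      Function.Surjective h ∧ IsPMorphismRel (PosBotLe G εG) (PosBotLe H εH) h := by
  have hgEmem : ∀ e : ↥G.edgeSet, Sym2.map g ↑e ∈ H.edgeSet := by
    intro e
    rw [hεG e, Sym2.map_pair_eq]
    exact (SimpleGraph.mem_edgeSet H).mpr (hHPg _ _ (adj_orient hεG e))
  set gE : ↥G.edgeSet → ↥H.edgeSet := fun e => ⟨Sym2.map g ↑e, hgEmem e⟩ with hgEdef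
  have hgE : ∀ e, (gE e : Sym2 VH) = Sym2.map g ↑e := fun e => rfl
  set F := FMap εG εH g gE with hFdef
  have hFsurj : ∀ y : PosElem VH ↥H.edgeSet, ∃ x, F x = y := by
    intro y
    cases y with
    | ver p => obtain ⟨v, rfl⟩ := hgsurj p; exact ⟨.ver v, rfl⟩
    | verA p => obtain ⟨v, rfl⟩ := hgsurj p; exact ⟨.verA v, rfl⟩
    | verB p => obtain ⟨v, rfl⟩ := hgsurj p; exact ⟨.verB v, rfl⟩
    | top1 => exact ⟨.top1, rfl⟩
    | top2 => exact ⟨.top2, rfl⟩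
    | infA => exact ⟨.infA, rfl⟩
    | infB => exact ⟨.infB, rfl⟩
    | edge1 f =>
      obtain ⟨v, hv⟩ := hgsurj (εH f).1
      obtain ⟨z, _, hF⟩ := buildA1 hεG hεH hgE hBPg hv
      exact ⟨z, hF⟩
    | edge2 f =>
      obtain ⟨v, hv⟩ := hgsurj (εH f).2
      obtain ⟨z, _, hF⟩ := buildA2 hεG hεH hgE hBPg hv
      exact ⟨z, hF⟩
  refine ⟨Option.map F, ?_, ?_, ?_⟩
  · intro y
    cases y with
    | none => exact ⟨none, rfl⟩
    | some y' =>
      obtain ⟨x, hx⟩ := hFsurj y'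
      exact ⟨some x, by simp [hx]⟩
  · intro x y hxy
    cases x with
    | none => exact trivial
    | some x' =>
      cases y with
      | none => exact hxy.elim
      | some y' => exact fmap_le hεG hεH hgE hBPg hxy
  · intro x y hxy
    cases x with
    | none =>
      rcases y with _ | y'
      · exact ⟨none, trivial, rfl⟩
      · obtain ⟨x, hx⟩ := hFsurj y'
        exact ⟨some x, trivial, by simp [hx]⟩
    | some x' =>
      cases y with
      | none => exact hxy.elim
      | some y' =>
        have hxy' : PUp εH (F x') y' := (posLe_iff hεH _ _).mp hxy
        suffices hz : ∃ z, PosLe G εG x' z ∧ F z = y' by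
          obtain ⟨z, hz1, hz2⟩ := hz
          exact ⟨some z, hz1, by simp [hz2]⟩
        clear hxy
        cases x' with
        | ver v =>
          cases y' <;> simp only [hFdef, FMap, PUp] at hxy' <;> try exact hxy'.elim
          case ver w => exact ⟨.ver v, posLe_refl _, by simp [hFdef, FMap, hxy']⟩
          case verA w => exact ⟨.verA v, posLe_of_cov (PosCov.ver_verA v), by simp [hFdef, FMap, hxy']⟩
          case verB w => exact ⟨.verB v, posLe_of_cov (PosCov.ver_verB v), by simp [hFdef, FMap, hxy']⟩
          case infA => exact ⟨.infA, (posLe_iff hεG _ _).mpr trivial, rfl⟩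
          case infB => exact ⟨.infB, (posLe_iff hεG _ _).mpr trivial, rfl⟩
          case top1 => exact ⟨.top1, (posLe_iff hεG _ _).mpr trivial, rfl⟩
          case top2 => exact ⟨.top2, (posLe_iff hεG _ _).mpr trivial, rfl⟩
          case edge1 f => exact buildV1 hεG hεH hgE hBPg hxy'
          case edge2 f => exact buildV2 hεG hεH hgE hBPg hxy'
        | verA v =>
          cases y' <;> simp only [hFdef, FMap, PUp] at hxy' <;> try exact hxy'.elim
          case verA w => exact ⟨.verA v, posLe_refl _, by simp [hFdef, FMap, hxy']⟩
          case infA => exact ⟨.infA, posLe_of_cov (PosCov.verA_infA v), rfl⟩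
          case top1 => exact ⟨.top1, verA_le_top hεG v _ (Or.inl rfl), rfl⟩
          case top2 => exact ⟨.top2, verA_le_top hεG v _ (Or.inr rfl), rfl⟩
          case edge1 f => exact buildA1 hεG hεH hgE hBPg hxy'
          case edge2 f => exact buildA2 hεG hεH hgE hBPg hxy'
        | verB v =>
          cases y' <;> simp only [hFdef, FMap, PUp] at hxy' <;> try exact hxy'.elim
          case verB w => exact ⟨.verB v, posLe_refl _, by simp [hFdef, FMap, hxy']⟩
          case infB => exact ⟨.infB, posLe_of_cov (PosCov.verB_infB v), rfl⟩
          case top1 => exact ⟨.top1, verB_le_top hεG v _ (Or.inl rfl), rfl⟩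
          case top2 => exact ⟨.top2, verB_le_top hεG v _ (Or.inr rfl), rfl⟩
          case edge1 f => exact buildB1 hεG hεH hgE hBPg hxy'
          case edge2 f => exact buildB2 hεG hεH hgE hBPg hxy'
        | edge1 e =>
          rcases cond_cases hεG hεH hgE e with ⟨_, hF1, _⟩ | ⟨_, hF1, _⟩ <;>
            rw [hFdef] at hxy' <;> rw [hF1] at hxy' <;>
              cases y' <;> simp only [PUp] at hxy' <;> try exact hxy'.elim
          case edge1 f =>
            exact ⟨.edge1 e, posLe_refl _, by rw [hFdef, hF1, hxy']⟩
          case top1 => exact ⟨.top1, posLe_of_cov (PosCov.edge1_top1 e), rfl⟩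
          case top2 => exact ⟨.top2, posLe_of_cov (PosCov.edge1_top2 e), rfl⟩
          case edge2 f =>
            exact ⟨.edge1 e, posLe_refl _, by rw [hFdef, hF1, hxy']⟩
          case top1 => exact ⟨.top1, posLe_of_cov (PosCov.edge1_top1 e), rfl⟩
          case top2 => exact ⟨.top2, posLe_of_cov (PosCov.edge1_top2 e), rfl⟩
        | edge2 e =>
          rcases cond_cases hεG hεH hgE e with ⟨_, _, hF2⟩ | ⟨_, _, hF2⟩ <;>
            rw [hFdef] at hxy' <;> rw [hF2] at hxy' <;>
              cases y' <;> simp only [PUp] at hxy' <;> try exact hxy'.elim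
          case edge2 f =>
            exact ⟨.edge2 e, posLe_refl _, by rw [hFdef, hF2, hxy']⟩
          case top1 => exact ⟨.top1, posLe_of_cov (PosCov.edge2_top1 e), rfl⟩
          case top2 => exact ⟨.top2, posLe_of_cov (PosCov.edge2_top2 e), rfl⟩
          case edge1 f =>
            exact ⟨.edge2 e, posLe_refl _, by rw [hFdef, hF2, hxy']⟩
          case top1 => exact ⟨.top1, posLe_of_cov (PosCov.edge2_top1 e), rfl⟩
          case top2 => exact ⟨.top2, posLe_of_cov (PosCov.edge2_top2 e), rfl⟩
        | top1 =>
          cases y' <;> simp only [hFdef, FMap, PUp] at hxy' <;> try exact hxy'.elim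
          case top1 => exact ⟨.top1, posLe_refl _, rfl⟩
        | top2 =>
          cases y' <;> simp only [hFdef, FMap, PUp] at hxy' <;> try exact hxy'.elim
          case top2 => exact ⟨.top2, posLe_refl _, rfl⟩
        | infA =>
          cases y' <;> simp only [hFdef, FMap, PUp] at hxy' <;> try exact hxy'.elim
          case infA => exact ⟨.infA, posLe_refl _, rfl⟩
        | infB =>
          cases y' <;> simp only [hFdef, FMap, PUp] at hxy' <;> try exact hxy'.elim
          case infB => exact ⟨.infB, posLe_refl _, rfl⟩

end ForwardMain
section Backward

variable {V : Type} {K : SimpleGraph V} {ε : ↥K.edgeSet → V × V}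

/-- Maximality in the rooted poset. -/
def PMaxB (K : SimpleGraph V) (ε : ↥K.edgeSet → V × V)
    (x : Option (PosElem V ↥K.edgeSet)) : Prop :=
  ∀ y, PosBotLe K ε x y → y = x

theorem pmax_iff (hε : OrientOK K ε) (x : Option (PosElem V ↥K.edgeSet)) :
    PMaxB K ε x ↔ (x = some .top1 ∨ x = some .top2 ∨ x = some .infA ∨ x = some .infB) := by
  constructor
  · intro hm
    match x with
    | none => exact absurd (hm (some .top1) trivial) (by simp)
    | some (.ver v) =>
      exact absurd (hm (some (.verA v)) (posLe_of_cov (PosCov.ver_verA v))) (by simp)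
    | some (.verA v) =>
      exact absurd (hm (some .infA) (posLe_of_cov (PosCov.verA_infA v))) (by simp)
    | some (.verB v) =>
      exact absurd (hm (some .infB) (posLe_of_cov (PosCov.verB_infB v))) (by simp)
    | some (.edge1 e) =>
      exact absurd (hm (some .top1) (posLe_of_cov (PosCov.edge1_top1 e))) (by simp)
    | some (.edge2 e) =>
      exact absurd (hm (some .top1) (posLe_of_cov (PosCov.edge2_top1 e))) (by simp)
    | some .top1 => exact Or.inl rfl
    | some .top2 => exact Or.inr (Or.inl rfl)
    | some .infA => exact Or.inr (Or.inr (Or.inl rfl))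
    | some .infB => exact Or.inr (Or.inr (Or.inr rfl))
  · rintro (rfl | rfl | rfl | rfl) y hy <;>
    · cases y with
      | none => exact hy.elim
      | some y' =>
        have hy' := (posLe_iff hε _ _).mp hy
        cases y' <;> first | rfl | exact hy'.elim

theorem exists_max_above (hε : OrientOK K ε) (x : Option (PosElem V ↥K.edgeSet)) :
    ∃ m, PMaxB K ε m ∧ PosBotLe K ε x m := by
  have l1 : PMaxB K ε (some .top1) := (pmax_iff hε _).mpr (Or.inl rfl)
  have l3 : PMaxB K ε (some .infA) := (pmax_iff hε _).mpr (Or.inr (Or.inr (Or.inl rfl)))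
  have l4 : PMaxB K ε (some .infB) := (pmax_iff hε _).mpr (Or.inr (Or.inr (Or.inr rfl)))
  match x with
  | none => exact ⟨some .top1, l1, trivial⟩
  | some (.ver v) => exact ⟨some .infA, l3, (posLe_iff hε _ _).mpr trivial⟩
  | some (.verA v) => exact ⟨some .infA, l3, (posLe_iff hε _ _).mpr trivial⟩
  | some (.verB v) => exact ⟨some .infB, l4, (posLe_iff hε _ _).mpr trivial⟩
  | some (.edge1 e) => exact ⟨some .top1, l1, (posLe_iff hε _ _).mpr trivial⟩
  | some (.edge2 e) => exact ⟨some .top1, l1, (posLe_iff hε _ _).mpr trivial⟩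
  | some .top1 => exact ⟨some .top1, l1, (posLe_iff hε _ _).mpr trivial⟩
  | some .top2 =>
    exact ⟨some .top2, (pmax_iff hε _).mpr (Or.inr (Or.inl rfl)),
      (posLe_iff hε _ _).mpr trivial⟩
  | some .infA => exact ⟨some .infA, l3, (posLe_iff hε _ _).mpr trivial⟩
  | some .infB => exact ⟨some .infB, l4, (posLe_iff hε _ _).mpr trivial⟩

theorem posBotLe_trans {x y z : Option (PosElem V ↥K.edgeSet)}
    (h1 : PosBotLe K ε x y) (h2 : PosBotLe K ε y z) : PosBotLe K ε x z := by
  match x, y, z with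
  | none, _, _ => exact trivial
  | some _, none, _ => exact h1.elim
  | some _, some _, none => exact h2.elim
  | some a, some b, some c => exact posLe_trans h1 h2

theorem posBotLe_refl (x : Option (PosElem V ↥K.edgeSet)) : PosBotLe K ε x x := by
  match x with
  | none => exact trivial
  | some a => exact posLe_refl a


theorem pup_le (hε : OrientOK K ε) {x y : PosElem V ↥K.edgeSet} (h : PUp ε x y) :
    PosBotLe K ε (some x) (some y) := (posLe_iff hε _ _).mpr h

theorem classify_all4 (hε : OrientOK K ε) (y : Option (PosElem V ↥K.edgeSet))
    (h1 : PosBotLe K ε y (some .top1)) (h2 : PosBotLe K ε y (some .top2))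
    (h3 : PosBotLe K ε y (some .infA)) (h4 : PosBotLe K ε y (some .infB)) :
    y = none ∨ ∃ p, y = some (.ver p) := by
  cases y with
  | none => exact Or.inl rfl
  | some y' =>
    have h3' := (posLe_iff hε _ _).mp h3
    have h4' := (posLe_iff hε _ _).mp h4
    cases y' <;> first | exact Or.inr ⟨_, rfl⟩ | exact h3'.elim | exact h4'.elim

theorem classify_TTA (hε : OrientOK K ε) (y : Option (PosElem V ↥K.edgeSet))
    (h1 : PosBotLe K ε y (some .top1)) (h2 : PosBotLe K ε y (some .top2))
    (h3 : PosBotLe K ε y (some .infA)) (h4 : ¬ PosBotLe K ε y (some .infB)) :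
    ∃ p, y = some (.verA p) := by
  cases y with
  | none => exact absurd trivial h4
  | some y' =>
    have h1' := (posLe_iff hε _ _).mp h1
    have h3' := (posLe_iff hε _ _).mp h3
    cases y' <;> first
      | exact ⟨_, rfl⟩
      | exact h3'.elim
      | exact h1'.elim
      | exact (h4 (pup_le hε trivial)).elim

theorem classify_TTB (hε : OrientOK K ε) (y : Option (PosElem V ↥K.edgeSet))
    (h1 : PosBotLe K ε y (some .top1)) (h2 : PosBotLe K ε y (some .top2))
    (h3 : PosBotLe K ε y (some .infB)) (h4 : ¬ PosBotLe K ε y (some .infA)) :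
    ∃ p, y = some (.verB p) := by
  cases y with
  | none => exact absurd trivial h4
  | some y' =>
    have h1' := (posLe_iff hε _ _).mp h1
    have h3' := (posLe_iff hε _ _).mp h3
    cases y' <;> first
      | exact ⟨_, rfl⟩
      | exact h3'.elim
      | exact h1'.elim
      | exact (h4 (pup_le hε trivial)).elim

theorem classify_TT (hε : OrientOK K ε) (y : Option (PosElem V ↥K.edgeSet))
    (h1 : PosBotLe K ε y (some .top1)) (h2 : PosBotLe K ε y (some .top2))
    (h3 : ¬ PosBotLe K ε y (some .infA)) (h4 : ¬ PosBotLe K ε y (some .infB)) :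
    ∃ f, y = some (.edge1 f) ∨ y = some (.edge2 f) := by
  cases y with
  | none => exact absurd trivial h4
  | some y' =>
    have h1' := (posLe_iff hε _ _).mp h1
    have h2' := (posLe_iff hε _ _).mp h2
    cases y' <;> first
      | exact ⟨_, Or.inl rfl⟩
      | exact ⟨_, Or.inr rfl⟩
      | exact h1'.elim
      | exact h2'.elim
      | exact (h3 (pup_le hε trivial)).elim
      | exact (h4 (pup_le hε trivial)).elim

theorem flags_IAIB (hε : OrientOK K ε) (y : Option (PosElem V ↥K.edgeSet))
    (h3 : PosBotLe K ε y (some .infA)) (h4 : PosBotLe K ε y (some .infB)) :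
    PosBotLe K ε y (some .top1) ∧ PosBotLe K ε y (some .top2) := by
  cases y with
  | none => exact ⟨trivial, trivial⟩
  | some y' =>
    have h3' := (posLe_iff hε _ _).mp h3
    have h4' := (posLe_iff hε _ _).mp h4
    cases y' <;> first
      | exact ⟨(posLe_iff hε _ _).mpr trivial, (posLe_iff hε _ _).mpr trivial⟩
      | exact h3'.elim
      | exact h4'.elim

theorem pigeon4 {A : Type} {s1 s2 s3 s4 m1 m2 m3 m4 : A}
    (hs12 : s1 ≠ s2) (hs13 : s1 ≠ s3) (hs14 : s1 ≠ s4)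
    (hs23 : s2 ≠ s3) (hs24 : s2 ≠ s4) (hs34 : s3 ≠ s4)
    (hm12 : m1 ≠ m2) (hm13 : m1 ≠ m3) (hm14 : m1 ≠ m4)
    (hm23 : m2 ≠ m3) (hm24 : m2 ≠ m4) (hm34 : m3 ≠ m4)
    (h1 : m1 = s1 ∨ m1 = s2 ∨ m1 = s3 ∨ m1 = s4)
    (h2 : m2 = s1 ∨ m2 = s2 ∨ m2 = s3 ∨ m2 = s4)
    (h3 : m3 = s1 ∨ m3 = s2 ∨ m3 = s3 ∨ m3 = s4)
    (h4 : m4 = s1 ∨ m4 = s2 ∨ m4 = s3 ∨ m4 = s4) :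
    (s1 = m1 ∨ s1 = m2 ∨ s1 = m3 ∨ s1 = m4) ∧
    (s2 = m1 ∨ s2 = m2 ∨ s2 = m3 ∨ s2 = m4) ∧
    (s3 = m1 ∨ s3 = m2 ∨ s3 = m3 ∨ s3 = m4) ∧
    (s4 = m1 ∨ s4 = m2 ∨ s4 = m3 ∨ s4 = m4) := by
  rcases h1 with rfl | rfl | rfl | rfl <;>
    rcases h2 with rfl | rfl | rfl | rfl <;>
      rcases h3 with rfl | rfl | rfl | rfl <;>
        rcases h4 with rfl | rfl | rfl | rfl <;>
          simp_all

theorem inj4 {A B : Type} {F : A → B} {m1 m2 m3 m4 : A} {c1 c2 c3 c4 : B}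
    (h1 : F m1 = c1) (h2 : F m2 = c2) (h3 : F m3 = c3) (h4 : F m4 = c4)
    (hc12 : c1 ≠ c2) (hc13 : c1 ≠ c3) (hc14 : c1 ≠ c4)
    (hc23 : c2 ≠ c3) (hc24 : c2 ≠ c4) (hc34 : c3 ≠ c4) :
    ∀ x y, (x = m1 ∨ x = m2 ∨ x = m3 ∨ x = m4) →
      (y = m1 ∨ y = m2 ∨ y = m3 ∨ y = m4) → F x = F y → x = y := by
  intro x y hx hy hxy
  rcases hx with rfl | rfl | rfl | rfl <;>
    rcases hy with rfl | rfl | rfl | rfl <;> simp_all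

end Backward
section BackwardMain

variable {VG VH : Type} {G : SimpleGraph VG} {H : SimpleGraph VH}
    {εG : ↥G.edgeSet → VG × VG} {εH : ↥H.edgeSet → VH × VH}

theorem backward_dir [Nonempty VH] (hεG : OrientOK G εG) (hεH : OrientOK H εH)
    (h : Option (PosElem VG ↥G.edgeSet) → Option (PosElem VH ↥H.edgeSet))
    (hsurj : Function.Surjective h)
    (hHP : ∀ x y, PosBotLe G εG x y → PosBotLe H εH (h x) (h y))
    (hBP : ∀ x y, PosBotLe H εH (h x) y → ∃ z, PosBotLe G εG x z ∧ h z = y) :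
    ∃ g : VG → VH, Function.Surjective g ∧ IsLocallySurjHom G H g := by
  -- the bottom goes to the bottom
  have hnone : h none = none := by
    obtain ⟨z, hz⟩ := hsurj none
    have h1 := hHP none z trivial
    rw [hz] at h1
    rcases hhn : h none with _ | t
    · rfl
    · rw [hhn] at h1; exact h1.elim
  -- maximal elements go to maximal elements
  have htrans : ∀ x, PMaxB G εG x → PMaxB H εH (h x) := by
    intro x hm y hy
    obtain ⟨z, hz, rfl⟩ := hBP x y hy
    rw [hm z hz]
  -- lifting of maximal elements
  have hlift : ∀ x m', PMaxB H εH m' → PosBotLe H εH (h x) m' →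
      ∃ m, PMaxB G εG m ∧ PosBotLe G εG x m ∧ h m = m' := by
    intro x m' hm' hle
    obtain ⟨z, hz, hzv⟩ := hBP x m' hle
    obtain ⟨m, hmmax, hmle⟩ := exists_max_above hεG z
    have h1 : PosBotLe H εH (h z) (h m) := hHP z m hmle
    rw [hzv] at h1
    exact ⟨m, hmmax, posBotLe_trans hz hmle, hm' (h m) h1⟩
  -- maximal preimages of the four maximal elements
  have hpre : ∀ c : PosElem VH ↥H.edgeSet, PMaxB H εH (some c) →
      ∃ m, PMaxB G εG m ∧ h m = some c := by
    intro c hc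
    obtain ⟨x, hx⟩ := hsurj (some c)
    obtain ⟨m, hm, _, hv⟩ := hlift x (some c) hc (by rw [hx]; exact posBotLe_refl _)
    exact ⟨m, hm, hv⟩
  obtain ⟨mT1, hmT1, hvT1⟩ := hpre .top1 ((pmax_iff hεH _).mpr (Or.inl rfl))
  obtain ⟨mT2, hmT2, hvT2⟩ := hpre .top2 ((pmax_iff hεH _).mpr (Or.inr (Or.inl rfl)))
  obtain ⟨mIA, hmIA, hvIA⟩ := hpre .infA ((pmax_iff hεH _).mpr (Or.inr (Or.inr (Or.inl rfl))))
  obtain ⟨mIB, hmIB, hvIB⟩ := hpre .infB ((pmax_iff hεH _).mpr (Or.inr (Or.inr (Or.inr rfl))))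
  have hm12 : mT1 ≠ mT2 := by intro e; rw [e, hvT2] at hvT1; simp at hvT1
  have hm13 : mT1 ≠ mIA := by intro e; rw [e, hvIA] at hvT1; simp at hvT1
  have hm14 : mT1 ≠ mIB := by intro e; rw [e, hvIB] at hvT1; simp at hvT1
  have hm23 : mT2 ≠ mIA := by intro e; rw [e, hvIA] at hvT2; simp at hvT2
  have hm24 : mT2 ≠ mIB := by intro e; rw [e, hvIB] at hvT2; simp at hvT2
  have hm34 : mIA ≠ mIB := by intro e; rw [e, hvIB] at hvIA; simp at hvIA
  obtain ⟨exT1, exT2, exIA, exIB⟩ :=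
    pigeon4 (s1 := (some .top1 : Option (PosElem VG ↥G.edgeSet))) (s2 := some .top2)
      (s3 := some .infA) (s4 := some .infB)
      (by simp) (by simp) (by simp) (by simp) (by simp) (by simp)
      hm12 hm13 hm14 hm23 hm24 hm34
      ((pmax_iff hεG mT1).mp hmT1) ((pmax_iff hεG mT2).mp hmT2)
      ((pmax_iff hεG mIA).mp hmIA) ((pmax_iff hεG mIB).mp hmIB)
  have hinjm := inj4 hvT1 hvT2 hvIA hvIB
    (by simp) (by simp) (by simp) (by simp) (by simp) (by simp)
  have hconv : ∀ x : Option (PosElem VG ↥G.edgeSet),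
      (x = some .top1 ∨ x = some .top2 ∨ x = some .infA ∨ x = some .infB) →
      (x = mT1 ∨ x = mT2 ∨ x = mIA ∨ x = mIB) := by
    rintro x (rfl | rfl | rfl | rfl)
    exacts [exT1, exT2, exIA, exIB]
  have hs_inj : ∀ x y : Option (PosElem VG ↥G.edgeSet),
      (x = some .top1 ∨ x = some .top2 ∨ x = some .infA ∨ x = some .infB) →
      (y = some .top1 ∨ y = some .top2 ∨ y = some .infA ∨ y = some .infB) →
      h x = h y → x = y :=
    fun x y hx hy => hinjm x y (hconv x hx) (hconv y hy)
  have hs4 : ∀ x : Option (PosElem VG ↥G.edgeSet),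
      (x = some .top1 ∨ x = some .top2 ∨ x = some .infA ∨ x = some .infB) →
      (h x = some .top1 ∨ h x = some .top2 ∨ h x = some .infA ∨ h x = some .infB) :=
    fun x hx => (pmax_iff hεH _).mp (htrans x ((pmax_iff hεG x).mpr hx))
  have hq12 : h (some (.top1 : PosElem VG ↥G.edgeSet)) ≠ h (some .top2) := by
    intro e; have := hs_inj _ _ (by simp) (by simp [Or.inr]) e
    · simp at this
  have hq13 : h (some (.top1 : PosElem VG ↥G.edgeSet)) ≠ h (some .infA) := by
    intro e; have := hs_inj _ _ (Or.inl rfl) (Or.inr (Or.inr (Or.inl rfl))) e; simp at this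
  have hq14 : h (some (.top1 : PosElem VG ↥G.edgeSet)) ≠ h (some .infB) := by
    intro e; have := hs_inj _ _ (Or.inl rfl) (Or.inr (Or.inr (Or.inr rfl))) e; simp at this
  have hq23 : h (some (.top2 : PosElem VG ↥G.edgeSet)) ≠ h (some .infA) := by
    intro e; have := hs_inj _ _ (Or.inr (Or.inl rfl)) (Or.inr (Or.inr (Or.inl rfl))) e; simp at this
  have hq24 : h (some (.top2 : PosElem VG ↥G.edgeSet)) ≠ h (some .infB) := by
    intro e; have := hs_inj _ _ (Or.inr (Or.inl rfl)) (Or.inr (Or.inr (Or.inr rfl))) e; simp at this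
  have hq34 : h (some (.infA : PosElem VG ↥G.edgeSet)) ≠ h (some .infB) := by
    intro e; have := hs_inj _ _ (Or.inr (Or.inr (Or.inl rfl))) (Or.inr (Or.inr (Or.inr rfl))) e; simp at this
  obtain ⟨exQT1, exQT2, exQIA, exQIB⟩ :=
    pigeon4 (s1 := (some .top1 : Option (PosElem VH ↥H.edgeSet))) (s2 := some .top2)
      (s3 := some .infA) (s4 := some .infB)
      (by simp) (by simp) (by simp) (by simp) (by simp) (by simp)
      hq12 hq13 hq14 hq23 hq24 hq34
      (hs4 _ (Or.inl rfl)) (hs4 _ (Or.inr (Or.inl rfl)))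
      (hs4 _ (Or.inr (Or.inr (Or.inl rfl)))) (hs4 _ (Or.inr (Or.inr (Or.inr rfl))))
  -- non-le facts through maximal elements
  have hnotle : ∀ (x c : PosElem VG ↥G.edgeSet),
      ((some c : Option (PosElem VG ↥G.edgeSet)) = some .top1 ∨ (some c) = some .top2 ∨
        (some c) = some .infA ∨ (some c) = some .infB) →
      ¬ PUp εG x c → ¬ PosBotLe H εH (h (some x)) (h (some c)) := by
    intro x c hc hnup hle
    obtain ⟨m, hmm, hmle, hmv⟩ := hlift _ _ (htrans _ ((pmax_iff hεG _).mpr hc)) hle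
    have hmc := hs_inj m (some c) ((pmax_iff hεG m).mp hmm) hc hmv
    rw [hmc] at hmle
    exact hnup ((posLe_iff hεG _ _).mp hmle)
  -- classification of preimages of vertices
  have hverPre : ∀ (x : Option (PosElem VG ↥G.edgeSet)) (p : VH),
      h x = some (.ver p) → ∃ v, x = some (.ver v) := by
    intro x p hx
    have k1 : PosBotLe H εH (h x) (some .top1) := by rw [hx]; exact pup_le hεH trivial
    have k2 : PosBotLe H εH (h x) (some .top2) := by rw [hx]; exact pup_le hεH trivial
    have k3 : PosBotLe H εH (h x) (some .infA) := by rw [hx]; exact pup_le hεH trivial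
    have k4 : PosBotLe H εH (h x) (some .infB) := by rw [hx]; exact pup_le hεH trivial
    obtain ⟨n1, hn1m, hn1le, hn1v⟩ := hlift x _ ((pmax_iff hεH _).mpr (Or.inl rfl)) k1
    obtain ⟨n2, hn2m, hn2le, hn2v⟩ := hlift x _ ((pmax_iff hεH _).mpr (Or.inr (Or.inl rfl))) k2
    obtain ⟨n3, hn3m, hn3le, hn3v⟩ :=
      hlift x _ ((pmax_iff hεH _).mpr (Or.inr (Or.inr (Or.inl rfl)))) k3
    obtain ⟨n4, hn4m, hn4le, hn4v⟩ :=
      hlift x _ ((pmax_iff hεH _).mpr (Or.inr (Or.inr (Or.inr rfl)))) k4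
    have hn12 : n1 ≠ n2 := by intro e; rw [e, hn2v] at hn1v; simp at hn1v
    have hn13 : n1 ≠ n3 := by intro e; rw [e, hn3v] at hn1v; simp at hn1v
    have hn14 : n1 ≠ n4 := by intro e; rw [e, hn4v] at hn1v; simp at hn1v
    have hn23 : n2 ≠ n3 := by intro e; rw [e, hn3v] at hn2v; simp at hn2v
    have hn24 : n2 ≠ n4 := by intro e; rw [e, hn4v] at hn2v; simp at hn2v
    have hn34 : n3 ≠ n4 := by intro e; rw [e, hn4v] at hn3v; simp at hn3v
    obtain ⟨f1, f2, f3, f4⟩ :=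
      pigeon4 (s1 := (some .top1 : Option (PosElem VG ↥G.edgeSet))) (s2 := some .top2)
        (s3 := some .infA) (s4 := some .infB)
        (by simp) (by simp) (by simp) (by simp) (by simp) (by simp)
        hn12 hn13 hn14 hn23 hn24 hn34
        ((pmax_iff hεG n1).mp hn1m) ((pmax_iff hεG n2).mp hn2m)
        ((pmax_iff hεG n3).mp hn3m) ((pmax_iff hεG n4).mp hn4m)
    have g1 : PosBotLe G εG x (some .top1) := by
      rcases f1 with h' | h' | h' | h' <;> rw [h'] <;>
        first | exact hn1le | exact hn2le | exact hn3le | exact hn4le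
    have g2 : PosBotLe G εG x (some .top2) := by
      rcases f2 with h' | h' | h' | h' <;> rw [h'] <;>
        first | exact hn1le | exact hn2le | exact hn3le | exact hn4le
    have g3 : PosBotLe G εG x (some .infA) := by
      rcases f3 with h' | h' | h' | h' <;> rw [h'] <;>
        first | exact hn1le | exact hn2le | exact hn3le | exact hn4le
    have g4 : PosBotLe G εG x (some .infB) := by
      rcases f4 with h' | h' | h' | h' <;> rw [h'] <;>
        first | exact hn1le | exact hn2le | exact hn3le | exact hn4le
    rcases classify_all4 hεG x g1 g2 g3 g4 with rfl | h'
    · rw [hnone] at hx; simp at hx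
    · exact h'
  -- every vertex goes to a vertex
  have hver : ∀ v : VG, ∃ p, h (some (.ver v)) = some (.ver p) := by
    intro v
    have l1 : PosBotLe H εH (h (some (.ver v))) (some .top1) := by
      rcases exQT1 with h' | h' | h' | h' <;> rw [h'] <;> exact hHP _ _ (pup_le hεG trivial)
    have l2 : PosBotLe H εH (h (some (.ver v))) (some .top2) := by
      rcases exQT2 with h' | h' | h' | h' <;> rw [h'] <;> exact hHP _ _ (pup_le hεG trivial)
    have l3 : PosBotLe H εH (h (some (.ver v))) (some .infA) := by
      rcases exQIA with h' | h' | h' | h' <;> rw [h'] <;> exact hHP _ _ (pup_le hεG trivial)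
    have l4 : PosBotLe H εH (h (some (.ver v))) (some .infB) := by
      rcases exQIB with h' | h' | h' | h' <;> rw [h'] <;> exact hHP _ _ (pup_le hεG trivial)
    rcases classify_all4 hεH _ l1 l2 l3 l4 with hn | ⟨p, hp⟩
    · exfalso
      have p0 : VH := Classical.arbitrary VH
      have hle : PosBotLe H εH (h (some (.ver v))) (some (.ver p0)) := by
        rw [hn]; exact trivial
      obtain ⟨z, hz, hzv⟩ := hBP _ _ hle
      obtain ⟨w, rfl⟩ := hverPre z p0 hzv
      have hvw := (posLe_iff hεG _ _).mp hz
      have hvw' : v = w := hvw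
      rw [← hvw'] at hzv
      rw [hn] at hzv
      simp at hzv
    · exact ⟨p, hp⟩
  obtain ⟨g, hg⟩ : ∃ g : VG → VH, ∀ v, h (some (.ver v)) = some (.ver (g v)) :=
    ⟨fun v => Classical.choose (hver v), fun v => Classical.choose_spec (hver v)⟩
  -- g is surjective
  have hgsurj : Function.Surjective g := by
    intro p
    obtain ⟨x, hx⟩ := hsurj (some (.ver p))
    obtain ⟨v, rfl⟩ := hverPre x p hx
    rw [hg v] at hx
    simp only [Option.some.injEq, PosElem.ver.injEq] at hx
    exact ⟨v, hx⟩
  -- determination of the two sides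
  have hsides : ∀ _ : VG,
      ((h (some (.infA : PosElem VG ↥G.edgeSet)) = some .infA ∧
        h (some (.infB : PosElem VG ↥G.edgeSet)) = some .infB) ∧
       ∀ u, h (some (.verA u)) = some (.verA (g u)) ∧
         h (some (.verB u)) = some (.verB (g u))) ∨
      ((h (some (.infA : PosElem VG ↥G.edgeSet)) = some .infB ∧
        h (some (.infB : PosElem VG ↥G.edgeSet)) = some .infA) ∧
       ∀ u, h (some (.verA u)) = some (.verB (g u)) ∧
         h (some (.verB u)) = some (.verA (g u))) := by
    intro v0
    have hAnotB : ∀ u, ¬ PosBotLe H εH (h (some (.verA u)))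
        (h (some (.infB : PosElem VG ↥G.edgeSet))) :=
      fun u => hnotle (.verA u) .infB (by simp) (fun F => F)
    have hBnotA : ∀ u, ¬ PosBotLe H εH (h (some (.verB u)))
        (h (some (.infA : PosElem VG ↥G.edgeSet))) :=
      fun u => hnotle (.verB u) .infA (by simp) (fun F => F)
    have lA1 : ∀ u, PosBotLe H εH (h (some (.verA u)))
        (h (some (.top1 : PosElem VG ↥G.edgeSet))) := fun u => hHP _ _ (pup_le hεG trivial)
    have lA2 : ∀ u, PosBotLe H εH (h (some (.verA u)))
        (h (some (.top2 : PosElem VG ↥G.edgeSet))) := fun u => hHP _ _ (pup_le hεG trivial)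
    have lA3 : ∀ u, PosBotLe H εH (h (some (.verA u)))
        (h (some (.infA : PosElem VG ↥G.edgeSet))) := fun u => hHP _ _ (pup_le hεG trivial)
    have lB1 : ∀ u, PosBotLe H εH (h (some (.verB u)))
        (h (some (.top1 : PosElem VG ↥G.edgeSet))) := fun u => hHP _ _ (pup_le hεG trivial)
    have lB2 : ∀ u, PosBotLe H εH (h (some (.verB u)))
        (h (some (.top2 : PosElem VG ↥G.edgeSet))) := fun u => hHP _ _ (pup_le hεG trivial)
    have lB3 : ∀ u, PosBotLe H εH (h (some (.verB u)))
        (h (some (.infB : PosElem VG ↥G.edgeSet))) := fun u => hHP _ _ (pup_le hεG trivial)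
    have hIA4 := hs4 (some .infA) (by simp)
    have hIB4 := hs4 (some .infB) (by simp)
    rcases hIB4 with hb | hb | hb | hb
    · exfalso
      have e3 : PosBotLe H εH (h (some (.verA v0))) (some .infA) := by
        rcases exQIA with h' | h' | h' | h' <;>
          first
          | (rw [h']; exact lA1 v0)
          | (rw [h']; exact lA2 v0)
          | (rw [h']; exact lA3 v0)
          | (rw [hb] at h'; simp at h')
      have e4 : PosBotLe H εH (h (some (.verA v0))) (some .infB) := by
        rcases exQIB with h' | h' | h' | h' <;>
          first
          | (rw [h']; exact lA1 v0)
          | (rw [h']; exact lA2 v0)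
          | (rw [h']; exact lA3 v0)
          | (rw [hb] at h'; simp at h')
      exact hAnotB v0 (by rw [hb]; exact (flags_IAIB hεH _ e3 e4).1)
    · exfalso
      have e3 : PosBotLe H εH (h (some (.verA v0))) (some .infA) := by
        rcases exQIA with h' | h' | h' | h' <;>
          first
          | (rw [h']; exact lA1 v0)
          | (rw [h']; exact lA2 v0)
          | (rw [h']; exact lA3 v0)
          | (rw [hb] at h'; simp at h')
      have e4 : PosBotLe H εH (h (some (.verA v0))) (some .infB) := by
        rcases exQIB with h' | h' | h' | h' <;>
          first
          | (rw [h']; exact lA1 v0)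
          | (rw [h']; exact lA2 v0)
          | (rw [h']; exact lA3 v0)
          | (rw [hb] at h'; simp at h')
      exact hAnotB v0 (by rw [hb]; exact (flags_IAIB hεH _ e3 e4).2)
    · -- case B : h (infB) = infA
      right
      have ha : h (some (.infA : PosElem VG ↥G.edgeSet)) = some .infB := by
        rcases hIA4 with ha | ha | ha | ha
        · exfalso
          have e3 : PosBotLe H εH (h (some (.verB v0))) (some .infA) := by
            rcases exQIA with h' | h' | h' | h' <;>
              first
              | (rw [h']; exact lB1 v0)
              | (rw [h']; exact lB2 v0)
              | (rw [h']; exact lB3 v0)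
              | (rw [ha] at h'; simp at h')
          have e4 : PosBotLe H εH (h (some (.verB v0))) (some .infB) := by
            rcases exQIB with h' | h' | h' | h' <;>
              first
              | (rw [h']; exact lB1 v0)
              | (rw [h']; exact lB2 v0)
              | (rw [h']; exact lB3 v0)
              | (rw [ha] at h'; simp at h')
              | (rw [hb] at h'; simp at h')
          exact hBnotA v0 (by rw [ha]; exact (flags_IAIB hεH _ e3 e4).1)
        · exfalso
          have e3 : PosBotLe H εH (h (some (.verB v0))) (some .infA) := by
            rcases exQIA with h' | h' | h' | h' <;>
              first
              | (rw [h']; exact lB1 v0)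
              | (rw [h']; exact lB2 v0)
              | (rw [h']; exact lB3 v0)
              | (rw [ha] at h'; simp at h')
          have e4 : PosBotLe H εH (h (some (.verB v0))) (some .infB) := by
            rcases exQIB with h' | h' | h' | h' <;>
              first
              | (rw [h']; exact lB1 v0)
              | (rw [h']; exact lB2 v0)
              | (rw [h']; exact lB3 v0)
              | (rw [ha] at h'; simp at h')
              | (rw [hb] at h'; simp at h')
          exact hBnotA v0 (by rw [ha]; exact (flags_IAIB hεH _ e3 e4).2)
        · exfalso
          have := hs_inj (some .infA) (some .infB) (by simp) (by simp) (ha.trans hb.symm)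
          simp at this
        · exact ha
      refine ⟨⟨ha, hb⟩, fun u => ⟨?_, ?_⟩⟩
      · have n1 : PosBotLe H εH (h (some (.verA u))) (some .top1) := by
          rcases exQT1 with h' | h' | h' | h' <;>
            first
            | (rw [h']; exact lA1 u)
            | (rw [h']; exact lA2 u)
            | (rw [ha] at h'; simp at h')
            | (rw [hb] at h'; simp at h')
        have n2 : PosBotLe H εH (h (some (.verA u))) (some .top2) := by
          rcases exQT2 with h' | h' | h' | h' <;>
            first
            | (rw [h']; exact lA1 u)
            | (rw [h']; exact lA2 u)
            | (rw [ha] at h'; simp at h')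
            | (rw [hb] at h'; simp at h')
        have n3 : PosBotLe H εH (h (some (.verA u))) (some .infB) := by
          rw [← ha]; exact lA3 u
        have n4 : ¬ PosBotLe H εH (h (some (.verA u))) (some .infA) := by
          rw [← hb]; exact hAnotB u
        obtain ⟨p, hp⟩ := classify_TTB hεH _ n1 n2 n3 n4
        have hq : PosBotLe H εH (h (some (.ver u))) (h (some (.verA u))) :=
          hHP _ _ (posLe_of_cov (PosCov.ver_verA u))
        rw [hg u, hp] at hq
        have hgu : g u = p := (posLe_iff hεH _ _).mp hq
        rw [hp, hgu]
      · have n1 : PosBotLe H εH (h (some (.verB u))) (some .top1) := by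
          rcases exQT1 with h' | h' | h' | h' <;>
            first
            | (rw [h']; exact lB1 u)
            | (rw [h']; exact lB2 u)
            | (rw [ha] at h'; simp at h')
            | (rw [hb] at h'; simp at h')
        have n2 : PosBotLe H εH (h (some (.verB u))) (some .top2) := by
          rcases exQT2 with h' | h' | h' | h' <;>
            first
            | (rw [h']; exact lB1 u)
            | (rw [h']; exact lB2 u)
            | (rw [ha] at h'; simp at h')
            | (rw [hb] at h'; simp at h')
        have n3 : PosBotLe H εH (h (some (.verB u))) (some .infA) := by
          rw [← hb]; exact lB3 u
        have n4 : ¬ PosBotLe H εH (h (some (.verB u))) (some .infB) := by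
          rw [← ha]; exact hBnotA u
        obtain ⟨p, hp⟩ := classify_TTA hεH _ n1 n2 n3 n4
        have hq : PosBotLe H εH (h (some (.ver u))) (h (some (.verB u))) :=
          hHP _ _ (posLe_of_cov (PosCov.ver_verB u))
        rw [hg u, hp] at hq
        have hgu : g u = p := (posLe_iff hεH _ _).mp hq
        rw [hp, hgu]
    · -- case A : h (infB) = infB
      left
      have ha : h (some (.infA : PosElem VG ↥G.edgeSet)) = some .infA := by
        rcases hIA4 with ha | ha | ha | ha
        · exfalso
          have e3 : PosBotLe H εH (h (some (.verB v0))) (some .infA) := by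
            rcases exQIA with h' | h' | h' | h' <;>
              first
              | (rw [h']; exact lB1 v0)
              | (rw [h']; exact lB2 v0)
              | (rw [ha] at h'; simp at h')
              | (rw [hb] at h'; simp at h')
          have e4 : PosBotLe H εH (h (some (.verB v0))) (some .infB) := by
            rcases exQIB with h' | h' | h' | h' <;>
              first
              | (rw [h']; exact lB1 v0)
              | (rw [h']; exact lB2 v0)
              | (rw [h']; exact lB3 v0)
              | (rw [ha] at h'; simp at h')
          exact hBnotA v0 (by rw [ha]; exact (flags_IAIB hεH _ e3 e4).1)
        · exfalso
          have e3 : PosBotLe H εH (h (some (.verB v0))) (some .infA) := by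
            rcases exQIA with h' | h' | h' | h' <;>
              first
              | (rw [h']; exact lB1 v0)
              | (rw [h']; exact lB2 v0)
              | (rw [ha] at h'; simp at h')
              | (rw [hb] at h'; simp at h')
          have e4 : PosBotLe H εH (h (some (.verB v0))) (some .infB) := by
            rcases exQIB with h' | h' | h' | h' <;>
              first
              | (rw [h']; exact lB1 v0)
              | (rw [h']; exact lB2 v0)
              | (rw [h']; exact lB3 v0)
              | (rw [ha] at h'; simp at h')
          exact hBnotA v0 (by rw [ha]; exact (flags_IAIB hεH _ e3 e4).2)
        · exact ha
        · exfalso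
          have := hs_inj (some .infA) (some .infB) (by simp) (by simp) (ha.trans hb.symm)
          simp at this
      refine ⟨⟨ha, hb⟩, fun u => ⟨?_, ?_⟩⟩
      · have n1 : PosBotLe H εH (h (some (.verA u))) (some .top1) := by
          rcases exQT1 with h' | h' | h' | h' <;>
            first
            | (rw [h']; exact lA1 u)
            | (rw [h']; exact lA2 u)
            | (rw [ha] at h'; simp at h')
            | (rw [hb] at h'; simp at h')
        have n2 : PosBotLe H εH (h (some (.verA u))) (some .top2) := by
          rcases exQT2 with h' | h' | h' | h' <;>
            first
            | (rw [h']; exact lA1 u)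
            | (rw [h']; exact lA2 u)
            | (rw [ha] at h'; simp at h')
            | (rw [hb] at h'; simp at h')
        have n3 : PosBotLe H εH (h (some (.verA u))) (some .infA) := by
          rw [← ha]; exact lA3 u
        have n4 : ¬ PosBotLe H εH (h (some (.verA u))) (some .infB) := by
          rw [← hb]; exact hAnotB u
        obtain ⟨p, hp⟩ := classify_TTA hεH _ n1 n2 n3 n4
        have hq : PosBotLe H εH (h (some (.ver u))) (h (some (.verA u))) :=
          hHP _ _ (posLe_of_cov (PosCov.ver_verA u))
        rw [hg u, hp] at hq
        have hgu : g u = p := (posLe_iff hεH _ _).mp hq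
        rw [hp, hgu]
      · have n1 : PosBotLe H εH (h (some (.verB u))) (some .top1) := by
          rcases exQT1 with h' | h' | h' | h' <;>
            first
            | (rw [h']; exact lB1 u)
            | (rw [h']; exact lB2 u)
            | (rw [ha] at h'; simp at h')
            | (rw [hb] at h'; simp at h')
        have n2 : PosBotLe H εH (h (some (.verB u))) (some .top2) := by
          rcases exQT2 with h' | h' | h' | h' <;>
            first
            | (rw [h']; exact lB1 u)
            | (rw [h']; exact lB2 u)
            | (rw [ha] at h'; simp at h')
            | (rw [hb] at h'; simp at h')
        have n3 : PosBotLe H εH (h (some (.verB u))) (some .infB) := by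
          rw [← hb]; exact lB3 u
        have n4 : ¬ PosBotLe H εH (h (some (.verB u))) (some .infA) := by
          rw [← ha]; exact hBnotA u
        obtain ⟨p, hp⟩ := classify_TTB hεH _ n1 n2 n3 n4
        have hq : PosBotLe H εH (h (some (.ver u))) (h (some (.verB u))) :=
          hHP _ _ (posLe_of_cov (PosCov.ver_verB u))
        rw [hg u, hp] at hq
        have hgu : g u = p := (posLe_iff hεH _ _).mp hq
        rw [hp, hgu]
  -- endpoints of edges match up
  have hkey : ∀ (e : ↥G.edgeSet) (f : ↥H.edgeSet) (x : Option (PosElem VG ↥G.edgeSet)),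
      (x = some (.edge1 e) ∨ x = some (.edge2 e)) →
      (h x = some (.edge1 f) ∨ h x = some (.edge2 f)) →
      (g (εG e).1 = (εH f).1 ∧ g (εG e).2 = (εH f).2) ∨
      (g (εG e).1 = (εH f).2 ∧ g (εG e).2 = (εH f).1) := by
    intro e f x hx hv
    rcases hsides (εG e).1 with ⟨_, hS⟩ | ⟨_, hS⟩ <;> rcases hx with rfl | rfl
    · have q1 : PosBotLe H εH (h (some (.verA (εG e).1))) (h (some (.edge1 e))) :=
        hHP _ _ (posLe_of_cov (PosCov.ua_edge1 e))
      have q2 : PosBotLe H εH (h (some (.verB (εG e).2))) (h (some (.edge1 e))) :=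
        hHP _ _ (posLe_of_cov (PosCov.vb_edge1 e))
      rw [(hS (εG e).1).1] at q1
      rw [(hS (εG e).2).2] at q2
      rcases hv with hv | hv <;> rw [hv] at q1 q2
      · exact Or.inl ⟨(posLe_iff hεH _ _).mp q1, (posLe_iff hεH _ _).mp q2⟩
      · exact Or.inr ⟨(posLe_iff hεH _ _).mp q1, (posLe_iff hεH _ _).mp q2⟩
    · have q1 : PosBotLe H εH (h (some (.verB (εG e).1))) (h (some (.edge2 e))) :=
        hHP _ _ (posLe_of_cov (PosCov.ub_edge2 e))
      have q2 : PosBotLe H εH (h (some (.verA (εG e).2))) (h (some (.edge2 e))) :=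
        hHP _ _ (posLe_of_cov (PosCov.va_edge2 e))
      rw [(hS (εG e).1).2] at q1
      rw [(hS (εG e).2).1] at q2
      rcases hv with hv | hv <;> rw [hv] at q1 q2
      · exact Or.inr ⟨(posLe_iff hεH _ _).mp q1, (posLe_iff hεH _ _).mp q2⟩
      · exact Or.inl ⟨(posLe_iff hεH _ _).mp q1, (posLe_iff hεH _ _).mp q2⟩
    · have q1 : PosBotLe H εH (h (some (.verA (εG e).1))) (h (some (.edge1 e))) :=
        hHP _ _ (posLe_of_cov (PosCov.ua_edge1 e))
      have q2 : PosBotLe H εH (h (some (.verB (εG e).2))) (h (some (.edge1 e))) :=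
        hHP _ _ (posLe_of_cov (PosCov.vb_edge1 e))
      rw [(hS (εG e).1).1] at q1
      rw [(hS (εG e).2).2] at q2
      rcases hv with hv | hv <;> rw [hv] at q1 q2
      · exact Or.inr ⟨(posLe_iff hεH _ _).mp q1, (posLe_iff hεH _ _).mp q2⟩
      · exact Or.inl ⟨(posLe_iff hεH _ _).mp q1, (posLe_iff hεH _ _).mp q2⟩
    · have q1 : PosBotLe H εH (h (some (.verB (εG e).1))) (h (some (.edge2 e))) :=
        hHP _ _ (posLe_of_cov (PosCov.ub_edge2 e))
      have q2 : PosBotLe H εH (h (some (.verA (εG e).2))) (h (some (.edge2 e))) :=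
        hHP _ _ (posLe_of_cov (PosCov.va_edge2 e))
      rw [(hS (εG e).1).2] at q1
      rw [(hS (εG e).2).1] at q2
      rcases hv with hv | hv <;> rw [hv] at q1 q2
      · exact Or.inl ⟨(posLe_iff hεH _ _).mp q1, (posLe_iff hεH _ _).mp q2⟩
      · exact Or.inr ⟨(posLe_iff hεH _ _).mp q1, (posLe_iff hεH _ _).mp q2⟩
  -- edges go to edges
  have hedge : ∀ e : ↥G.edgeSet, ∃ f, h (some (.edge1 e)) = some (.edge1 f) ∨
      h (some (.edge1 e)) = some (.edge2 f) := by
    intro e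
    have lE1 : PosBotLe H εH (h (some (.edge1 e)))
        (h (some (.top1 : PosElem VG ↥G.edgeSet))) := hHP _ _ (pup_le hεG trivial)
    have lE2 : PosBotLe H εH (h (some (.edge1 e)))
        (h (some (.top2 : PosElem VG ↥G.edgeSet))) := hHP _ _ (pup_le hεG trivial)
    rcases hsides (εG e).1 with ⟨⟨ha, hb⟩, _⟩ | ⟨⟨ha, hb⟩, _⟩
    · have n1 : PosBotLe H εH (h (some (.edge1 e))) (some .top1) := by
        rcases exQT1 with h' | h' | h' | h' <;>
          first
          | (rw [h']; exact lE1)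
          | (rw [h']; exact lE2)
          | (rw [ha] at h'; simp at h')
          | (rw [hb] at h'; simp at h')
      have n2 : PosBotLe H εH (h (some (.edge1 e))) (some .top2) := by
        rcases exQT2 with h' | h' | h' | h' <;>
          first
          | (rw [h']; exact lE1)
          | (rw [h']; exact lE2)
          | (rw [ha] at h'; simp at h')
          | (rw [hb] at h'; simp at h')
      have n3 : ¬ PosBotLe H εH (h (some (.edge1 e))) (some .infA) := by
        rw [← ha]; exact hnotle _ .infA (by simp) (fun F => F)
      have n4 : ¬ PosBotLe H εH (h (some (.edge1 e))) (some .infB) := by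
        rw [← hb]; exact hnotle _ .infB (by simp) (fun F => F)
      exact classify_TT hεH _ n1 n2 n3 n4
    · have n1 : PosBotLe H εH (h (some (.edge1 e))) (some .top1) := by
        rcases exQT1 with h' | h' | h' | h' <;>
          first
          | (rw [h']; exact lE1)
          | (rw [h']; exact lE2)
          | (rw [ha] at h'; simp at h')
          | (rw [hb] at h'; simp at h')
      have n2 : PosBotLe H εH (h (some (.edge1 e))) (some .top2) := by
        rcases exQT2 with h' | h' | h' | h' <;>
          first
          | (rw [h']; exact lE1)
          | (rw [h']; exact lE2)
          | (rw [ha] at h'; simp at h')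
          | (rw [hb] at h'; simp at h')
      have n3 : ¬ PosBotLe H εH (h (some (.edge1 e))) (some .infA) := by
        rw [← hb]; exact hnotle _ .infB (by simp) (fun F => F)
      have n4 : ¬ PosBotLe H εH (h (some (.edge1 e))) (some .infB) := by
        rw [← ha]; exact hnotle _ .infA (by simp) (fun F => F)
      exact classify_TT hεH _ n1 n2 n3 n4
  -- homomorphism property of g
  have hHPg : ∀ u v : VG, G.Adj u v → H.Adj (g u) (g v) := by
    intro u v huv
    have hmem : s(u, v) ∈ G.edgeSet := (SimpleGraph.mem_edgeSet G).mpr huv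
    obtain ⟨f, hf⟩ := hedge ⟨s(u, v), hmem⟩
    have hends := hkey ⟨s(u, v), hmem⟩ f _ (Or.inl rfl) hf
    have hab : H.Adj (g (εG ⟨s(u, v), hmem⟩).1) (g (εG ⟨s(u, v), hmem⟩).2) := by
      rcases hends with ⟨r1, r2⟩ | ⟨r1, r2⟩ <;> rw [r1, r2]
      · exact adj_orient hεH f
      · exact (adj_orient hεH f).symm
    rcases orient_pair hεG hmem with h1 | h1 <;> rw [h1] at hab
    · exact hab
    · exact hab.symm
  -- backward property of g
  have hBPg : ∀ (u : VG) (w : VH), H.Adj (g u) w → ∃ v, G.Adj u v ∧ g v = w := by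
    intro u w hw
    have hmem : s(g u, w) ∈ H.edgeSet := (SimpleGraph.mem_edgeSet H).mpr hw
    have hle : PosBotLe H εH (h (some (.ver u))) (some (.edge1 ⟨s(g u, w), hmem⟩)) := by
      rw [hg u]
      refine pup_le hεH ?_
      show g u = (εH _).1 ∨ g u = (εH _).2
      rcases orient_pair hεH hmem with h1 | h1
      · exact Or.inl (congrArg Prod.fst h1).symm
      · exact Or.inr (congrArg Prod.snd h1).symm
    obtain ⟨z, hz, hzv⟩ := hBP _ _ hle
    rcases z with _ | z'
    · rw [hnone] at hzv; simp at hzv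
    have hFIN : ∀ e : ↥G.edgeSet, (u = (εG e).1 ∨ u = (εG e).2) →
        ((g (εG e).1 = (εH ⟨s(g u, w), hmem⟩).1 ∧ g (εG e).2 = (εH ⟨s(g u, w), hmem⟩).2) ∨
         (g (εG e).1 = (εH ⟨s(g u, w), hmem⟩).2 ∧ g (εG e).2 = (εH ⟨s(g u, w), hmem⟩).1)) →
        ∃ v, G.Adj u v ∧ g v = w := by
      intro e hu hends
      have hf2 : s((εH ⟨s(g u, w), hmem⟩).1, (εH ⟨s(g u, w), hmem⟩).2) = s(g u, w) :=
        (hεH ⟨s(g u, w), hmem⟩).symm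
      rw [Sym2.eq_iff] at hf2
      have hne := epsH_ne hεH ⟨s(g u, w), hmem⟩
      have hadj := adj_orient hεG e
      rcases hu with hu | hu <;> rcases hends with ⟨r1, r2⟩ | ⟨r1, r2⟩ <;>
        rcases hf2 with ⟨q1, q2⟩ | ⟨q1, q2⟩
      · exact ⟨(εG e).2, by rw [hu]; exact hadj, r2.trans q2⟩
      · have hgu : g u = g (εG e).1 := by rw [hu]
        exact absurd (r1.symm.trans (hgu.symm.trans q2.symm)) hne
      · have hgu : g u = g (εG e).1 := by rw [hu]
        exact absurd (q1.trans (hgu.trans r1)) hne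
      · exact ⟨(εG e).2, by rw [hu]; exact hadj, r2.trans q1⟩
      · have hgu : g u = g (εG e).2 := by rw [hu]
        exact absurd (q1.trans (hgu.trans r2)) hne
      · exact ⟨(εG e).1, by rw [hu]; exact hadj.symm, r1.trans q1⟩
      · exact ⟨(εG e).1, by rw [hu]; exact hadj.symm, r1.trans q2⟩
      · have hgu : g u = g (εG e).2 := by rw [hu]
        exact absurd (q2.trans (hgu.trans r2)).symm hne
    have hzup := (posLe_iff hεG _ _).mp hz
    cases z' with
    | ver w' => rw [hg w'] at hzv; simp at hzv
    | verA w' => rcases hsides w' with hS | hS <;> rw [(hS.2 w').1] at hzv <;> simp at hzv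
    | verB w' => rcases hsides w' with hS | hS <;> rw [(hS.2 w').2] at hzv <;> simp at hzv
    | top1 =>
      rcases hs4 (some .top1) (by simp) with h' | h' | h' | h' <;> rw [h'] at hzv <;> simp at hzv
    | top2 =>
      rcases hs4 (some .top2) (by simp) with h' | h' | h' | h' <;> rw [h'] at hzv <;> simp at hzv
    | infA =>
      rcases hs4 (some .infA) (by simp) with h' | h' | h' | h' <;> rw [h'] at hzv <;> simp at hzv
    | infB =>
      rcases hs4 (some .infB) (by simp) with h' | h' | h' | h' <;> rw [h'] at hzv <;> simp at hzv
    | edge1 e => exact hFIN e hzup (hkey e _ _ (Or.inl rfl) (Or.inl hzv))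
    | edge2 e => exact hFIN e hzup (hkey e _ _ (Or.inr rfl) (Or.inl hzv))
  exact ⟨g, hgsurj, hHPg, hBPg⟩

end BackwardMain
theorem lsh_iff_pMorphism_bot {VG VH : Type} [Fintype VG] [Fintype VH] [Nonempty VH]
    (G : SimpleGraph VG) (H : SimpleGraph VH)
    (εG : ↥G.edgeSet → VG × VG) (hεG : OrientOK G εG)
    (εH : ↥H.edgeSet → VH × VH) (hεH : OrientOK H εH) :
    (∃ g : VG → VH, Function.Surjective g ∧ IsLocallySurjHom G H g) ↔
    (∃ h : Option (PosElem VG ↥G.edgeSet) → Option (PosElem VH ↥H.edgeSet),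
      Function.Surjective h ∧ IsPMorphismRel (PosBotLe G εG) (PosBotLe H εH) h) := by
  constructor
  · rintro ⟨g, hsurj, hHPg, hBPg⟩
    exact forward_dir hεG hεH g hsurj hHPg hBPg
  · rintro ⟨h, hsurj, hHP, hBP⟩
    exact backward_dir hεG hεH h hsurj hHP hBP
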